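/- In the braid group B_3, the elements g = σ_1 and h = σ_2² satisfy the relation g h g h = h g h g (indeed both sides equal (σ_1 σ_2)³), but g h ≠ h g. Consequently, the subgroup of B_3 generated by g and h is neither abelian nor free of rank 2. -/

import Mathlib

/-- The braid relations on `n` strands, as elements of the free group on the
`n-1` generators `σ_1, …, σ_{n-1}` (indexed by `Fin (n-1)`): the commutation
relations `σ_i σ_j = σ_j σ_i` for `|i - j| ≥ 2` and the braid relations
`σ_i σ_{i+1} σ_i = σ_{i+1} σ_i σ_{i+1}`. -/
def braidRels (n : ℕ) : Set (FreeGroup (Fin (n - 1))) :=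
  {r | ∃ i j : Fin (n - 1), i.val + 2 ≤ j.val ∧
      r = FreeGroup.of i * FreeGroup.of j * (FreeGroup.of i)⁻¹ * (FreeGroup.of j)⁻¹} ∪
  {r | ∃ i j : Fin (n - 1), j.val = i.val + 1 ∧
      r = FreeGroup.of i * FreeGroup.of j * FreeGroup.of i *
        (FreeGroup.of j * FreeGroup.of i * FreeGroup.of j)⁻¹}

/-- The braid group on `n` strands, presented by generators and relations. -/
def BraidGroup (n : ℕ) : Type := PresentedGroup (braidRels n)

instance (n : ℕ) : Group (BraidGroup n) :=
  inferInstanceAs (Group (PresentedGroup (braidRels n)))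

/-- The standard generator `σ_{i+1}` of the braid group. -/
def braidGen {n : ℕ} (i : Fin (n - 1)) : BraidGroup n := PresentedGroup.of i

/-- The transposition `(i, i+1)` in `Perm (Fin n)` associated to the generator `σ_i`. -/
def braidGenPerm (n : ℕ) (i : Fin (n - 1)) : Equiv.Perm (Fin n) :=
  Equiv.swap ⟨i.val, by have := i.isLt; omega⟩ ⟨i.val + 1, by have := i.isLt; omega⟩

private lemma swap_braid_rel {α : Type*} [DecidableEq α] {a b c : α}
    (hab : a ≠ b) (hac : a ≠ c) (hbc : b ≠ c) :
    Equiv.swap a b * Equiv.swap b c * Equiv.swap a b =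
      Equiv.swap b c * Equiv.swap a b * Equiv.swap b c := by
  calc Equiv.swap a b * Equiv.swap b c * Equiv.swap a b
      = Equiv.swap b a * Equiv.swap c b * Equiv.swap b a := by
        rw [Equiv.swap_comm a b, Equiv.swap_comm b c]
    _ = Equiv.swap a c := Equiv.swap_mul_swap_mul_swap hbc.symm hac.symm
    _ = Equiv.swap c a := Equiv.swap_comm a c
    _ = Equiv.swap b c * Equiv.swap a b * Equiv.swap b c :=
        (Equiv.swap_mul_swap_mul_swap hab hac).symm

private lemma swap_disjoint_commute {n : ℕ} {a b c d : Fin n}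
    (h1 : a ≠ c) (h2 : a ≠ d) (h3 : b ≠ c) (h4 : b ≠ d) :
    Commute (Equiv.swap a b) (Equiv.swap c d) := by
  apply Equiv.Perm.Disjoint.commute
  intro x
  by_cases hxa : x = a
  · right; rw [hxa]; exact Equiv.swap_apply_of_ne_of_ne h1 h2
  by_cases hxb : x = b
  · right; rw [hxb]; exact Equiv.swap_apply_of_ne_of_ne h3 h4
  · left; exact Equiv.swap_apply_of_ne_of_ne hxa hxb

lemma braidRels_hold (n : ℕ) : ∀ r ∈ braidRels n, FreeGroup.lift (braidGenPerm n) r = 1 := by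
  rintro r (⟨i, j, hij, rfl⟩ | ⟨i, j, hij, rfl⟩) <;>
      simp only [map_mul, map_inv, FreeGroup.lift_apply_of, braidGenPerm]
  · have hcomm : Commute
        (Equiv.swap (⟨i.val, by have := i.isLt; omega⟩ : Fin n)
          ⟨i.val + 1, by have := i.isLt; omega⟩)
        (Equiv.swap (⟨j.val, by have := j.isLt; omega⟩ : Fin n)
          ⟨j.val + 1, by have := j.isLt; omega⟩) :=
      swap_disjoint_commute (by simp [Fin.ext_iff]; omega) (by simp [Fin.ext_iff]; omega)
        (by simp [Fin.ext_iff]; omega) (by simp [Fin.ext_iff]; omega)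
    rw [hcomm.eq, mul_inv_cancel_right, mul_inv_cancel]
  · have hj : (⟨j.val, by have := j.isLt; omega⟩ : Fin n) =
        ⟨i.val + 1, by have := i.isLt; omega⟩ := by simp [Fin.ext_iff, hij]
    have hj1 : (⟨j.val + 1, by have := j.isLt; omega⟩ : Fin n) =
        ⟨i.val + 2, by have := j.isLt; omega⟩ := by simp [Fin.ext_iff, hij]
    rw [hj, hj1, mul_inv_eq_one]
    exact swap_braid_rel (by simp [Fin.ext_iff]) (by simp [Fin.ext_iff]) (by simp [Fin.ext_iff])

/-- The natural projection from the braid group to the symmetric group, sending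
`σ_i` to the transposition `(i, i+1)`. -/
def braidPerm (n : ℕ) : BraidGroup n →* Equiv.Perm (Fin n) :=
  PresentedGroup.toGroup (braidRels_hold n)

/-- The pure braid group on `n` strands: the kernel of the projection from the
braid group to the symmetric group. -/
def PureBraidGroup (n : ℕ) : Subgroup (BraidGroup n) := (braidPerm n).ker

/-- The first standard generator `σ₁` of the braid group `B₃` (a half-twist). -/
def sigma1 : BraidGroup 3 := braidGen ⟨0, by omega⟩

/-- The second standard generator `σ₂` of the braid group `B₃`. -/
def sigma2 : BraidGroup 3 := braidGen ⟨1, by omega⟩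

instance : DecidableEq (Matrix (Fin 2) (Fin 2) (ZMod 3)) :=
  fun (M N : Fin 2 → Fin 2 → ZMod 3) => decidable_of_iff (∀ i j, M i j = N i j)
    ⟨fun h => by ext i j; exact h i j, fun h i j => by rw [h]⟩
instance : DecidableEq (Matrix.SpecialLinearGroup (Fin 2) (ZMod 3)) :=
  fun a b => decidable_of_iff (a.1 = b.1) Subtype.ext_iff.symm
private def myA : Matrix.SpecialLinearGroup (Fin 2) (ZMod 3) := ⟨!![1,1;0,1], by decide⟩
private def myB : Matrix.SpecialLinearGroup (Fin 2) (ZMod 3) := ⟨!![1,0;-1,1], by decide⟩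

private lemma myRelsHold :
    ∀ r ∈ braidRels 3, FreeGroup.lift (![myA, myB] : Fin (3-1) → _) r = 1 := by
  rintro r (⟨i, j, hij, rfl⟩ | ⟨i, j, hij, rfl⟩)
  · exact absurd hij (by have := j.isLt; omega)
  · have hlt := j.isLt
    have hi : i = ⟨0, by norm_num⟩ := by apply Fin.ext; simp only [Fin.val_mk]; omega
    have hj : j = ⟨1, by norm_num⟩ := by apply Fin.ext; simp only [Fin.val_mk]; omega
    rw [hi, hj]
    simp only [map_mul, map_inv, FreeGroup.lift_apply_of]
    show myA * myB * myA * (myB * myA * myB)⁻¹ = 1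
    decide

private def psi : BraidGroup 3 →* Matrix.SpecialLinearGroup (Fin 2) (ZMod 3) :=
  PresentedGroup.toGroup myRelsHold

private lemma psi_s1 : psi sigma1 = myA := PresentedGroup.toGroup.of myRelsHold
private lemma psi_s2 : psi sigma2 = myB := PresentedGroup.toGroup.of myRelsHold

private lemma braid_rel3 : sigma1 * sigma2 * sigma1 = sigma2 * sigma1 * sigma2 := by
  have hmem : (FreeGroup.of (⟨0, by omega⟩ : Fin (3-1)) * FreeGroup.of ⟨1, by omega⟩ *
      FreeGroup.of ⟨0, by omega⟩ * (FreeGroup.of ⟨1, by omega⟩ * FreeGroup.of ⟨0, by omega⟩ *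
      FreeGroup.of ⟨1, by omega⟩)⁻¹) ∈ braidRels 3 :=
    Or.inr ⟨⟨0, by omega⟩, ⟨1, by omega⟩, rfl, rfl⟩
  have h1 := (QuotientGroup.eq_one_iff (N := Subgroup.normalClosure (braidRels 3)) _).mpr
    (Subgroup.subset_normalClosure hmem)
  have h2 : PresentedGroup.mk (braidRels 3) (FreeGroup.of (⟨0, by omega⟩ : Fin (3-1)) *
      FreeGroup.of ⟨1, by omega⟩ * FreeGroup.of ⟨0, by omega⟩ *
      (FreeGroup.of ⟨1, by omega⟩ * FreeGroup.of ⟨0, by omega⟩ *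
      FreeGroup.of ⟨1, by omega⟩)⁻¹) = 1 := h1
  rw [map_mul, map_mul, map_inv, map_mul, map_mul, mul_inv_eq_one] at h2
  exact h2


namespace FreeGroupAux
open FreeGroup
variable {α : Type*} [DecidableEq α]

private lemma reduce_cons_eq {l : List (α × Bool)} {b : α} {s : Bool}
    (hl : reduce l = l) (hh : l.head? ≠ some (b, !s)) :
    reduce ((b, s) :: l) = (b, s) :: l := by
  rw [FreeGroup.reduce.cons, hl]
  cases l with
  | nil => rfl
  | cons hd tl =>
    dsimp only
    rw [if_neg]
    rintro ⟨h1, h2⟩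
    apply hh
    simp only [List.head?_cons, Option.some.injEq]
    obtain ⟨x, t⟩ := hd
    simp only at h1 h2
    subst h1
    cases t <;> cases s <;> first | rfl | exact absurd h2 (by decide)

private lemma reduce_append_eq {l : List (α × Bool)} {b : α}
    (hl : reduce l = l) (hh : l.getLast? ≠ some (b, false)) :
    reduce (l ++ [(b, true)]) = l ++ [(b, true)] := by
  have hinv : invRev ((b, false) :: invRev l) = l ++ [(b, true)] := by
    simp [invRev, List.map_reverse, Function.comp_def]
  have hredinv : reduce (invRev l) = invRev l := by
    rw [reduce_invRev, hl]
  have hhead : (invRev l).head? ≠ some (b, !false) := by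
    rw [show invRev l = (l.map fun g : α × Bool => (g.1, !g.2)).reverse from rfl]
    rw [List.head?_reverse]
    intro hcon
    apply hh
    rcases hgl : l.getLast? with _ | x
    · rw [List.getLast?_map, hgl] at hcon; simp at hcon
    · rw [List.getLast?_map, hgl] at hcon
      obtain ⟨a, t⟩ := x
      simp only [Option.map_some, Option.some.injEq, Prod.mk.injEq] at hcon
      obtain ⟨rfl, ht⟩ := hcon
      cases t
      · rfl
      · simp at ht
  calc reduce (l ++ [(b, true)]) = reduce (invRev ((b, false) :: invRev l)) := by rw [hinv]
    _ = invRev (reduce ((b, false) :: invRev l)) := reduce_invRev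
    _ = invRev ((b, false) :: invRev l) := by rw [reduce_cons_eq hredinv hhead]
    _ = l ++ [(b, true)] := hinv

/-- If `c` commutes with `of b` and `c ≠ 1`, the first letter of the reduced word of `c`
is `b` (with some sign). -/
private lemma head_of_commute {c : FreeGroup α} {b : α}
    (h : c * of b = of b * c) (hc : c ≠ 1) :
    ∃ s, c.toWord.head? = some (b, s) := by
  set l := c.toWord with hlw
  have hlred : reduce l = l := reduce_toWord c
  have hlne : l ≠ [] := by
    intro hnil
    exact hc (by rwa [toWord_eq_nil_iff] at hnil)
  by_contra hcon
  push_neg at hcon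
  -- head of l is not of the form (b, s)
  have hhead : ∀ s : Bool, l.head? ≠ some (b, s) := fun s => hcon s
  -- of b * c has reduced word (b,true)::l
  have h1 : (of b * c).toWord = (b, true) :: l := by
    have hcmk : c = mk l := (mk_toWord (x := c)).symm
    have : of b * c = mk ((b, true) :: l) := by
      rw [hcmk, show (of b : FreeGroup α) = mk [(b, true)] from rfl, mul_mk]
      rfl
    rw [this, toWord_mk, reduce_cons_eq hlred (hhead _)]
  rcases hgl : l.getLast? with _ | x
  · exact hlne (List.getLast?_eq_none_iff.mp hgl)
  by_cases hxb : x = (b, false)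
  · -- cancellation at the end: norm drops
    subst hxb
    have hsplit : l = l.dropLast ++ [(b, false)] := by
      conv_lhs => rw [← List.dropLast_append_getLast hlne]
      rw [List.getLast?_eq_getLast hlne] at hgl
      rw [Option.some_inj] at hgl
      rw [hgl]
    have hcval : c = mk l.dropLast * (of b)⁻¹ := by
      rw [show ((of b)⁻¹ : FreeGroup α) = mk [(b, false)] from rfl, mul_mk, ← hsplit]
      exact (mk_toWord (x := c)).symm
    have hnorm1 : (c * of b).norm ≤ l.length - 1 := by
      rw [hcval, inv_mul_cancel_right]
      calc (mk l.dropLast).norm ≤ l.dropLast.length := norm_mk_le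
        _ = l.length - 1 := by rw [List.length_dropLast]
    have hnorm2 : (of b * c).norm = l.length + 1 := by
      simp only [FreeGroup.norm, h1, List.length_cons]
    rw [h] at hnorm1
    rw [hnorm2] at hnorm1
    have : 0 < l.length := List.length_pos_iff.mpr hlne
    omega
  · -- no cancellation: word equality forces head letter b
    have h2 : (c * of b).toWord = l ++ [(b, true)] := by
      have : c * of b = mk (l ++ [(b, true)]) := by
        conv_lhs => rw [show c = mk l from (mk_toWord (x := c)).symm]
        rw [show (of b : FreeGroup α) = mk [(b, true)] from rfl, mul_mk]
      rw [this, toWord_mk]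
      apply reduce_append_eq hlred
      rw [hgl]
      intro hcc
      exact hxb (by injection hcc)
    have := h ▸ h2
    rw [h1] at this
    have hheads : l.head? = some (b, true) := by
      have hlen := congrArg List.head? this
      rw [List.head?_append_of_ne_nil _ hlne] at hlen
      simp only [List.head?_cons] at hlen
      exact hlen.symm
    exact hhead true hheads

lemma eq_one_of_commute_of_of {c : FreeGroup α} {b₁ b₂ : α} (hne : b₁ ≠ b₂)
    (h₁ : c * of b₁ = of b₁ * c) (h₂ : c * of b₂ = of b₂ * c) : c = 1 := by
  by_contra hc
  obtain ⟨s₁, hs₁⟩ := head_of_commute h₁ hc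
  obtain ⟨s₂, hs₂⟩ := head_of_commute h₂ hc
  rw [hs₁] at hs₂
  simp only [Option.some.injEq, Prod.mk.injEq] at hs₂
  exact hne hs₂.1

end FreeGroupAux

private lemma braid_calc {G : Type*} [Group G] (a b : G) (hr : a * b * a = b * a * b) :
    a * b ^ 2 * a * b ^ 2 = (a * b) ^ 3 ∧ b ^ 2 * a * b ^ 2 * a = (a * b) ^ 3 ∧
    (a * b) ^ 3 * a = a * (a * b) ^ 3 ∧ (a * b) ^ 3 * b = b * (a * b) ^ 3 := by
  have hba : (a * b) ^ 3 = (b * a) ^ 3 := by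
    calc (a * b) ^ 3 = (a * b * a) * (b * a * b) := by simp [pow_succ, mul_assoc]
      _ = (b * a * b) * (a * b * a) := by rw [hr]
      _ = (b * a) ^ 3 := by simp [pow_succ, mul_assoc]
  refine ⟨?_, ?_, ?_, ?_⟩
  · calc a * b ^ 2 * a * b ^ 2 = a * b * (b * a * b) * b := by simp [pow_succ, mul_assoc]
      _ = a * b * (a * b * a) * b := by rw [hr]
      _ = (a * b) ^ 3 := by simp [pow_succ, mul_assoc]
  · calc b ^ 2 * a * b ^ 2 * a = b * (b * a * b) * (b * a) := by simp [pow_succ, mul_assoc]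
      _ = b * (a * b * a) * (b * a) := by rw [hr]
      _ = (b * a) ^ 3 := by simp [pow_succ, mul_assoc]
      _ = (a * b) ^ 3 := hba.symm
  · calc (a * b) ^ 3 * a = a * (b * a) ^ 3 := by simp [pow_succ, mul_assoc]
      _ = a * (a * b) ^ 3 := by rw [hba]
  · calc (a * b) ^ 3 * b = (b * a) ^ 3 * b := by rw [hba]
      _ = b * (a * b) ^ 3 := by simp [pow_succ, mul_assoc]

/-- In `B₃`, the half-twist `g = σ₁` and the Dehn twist `h = σ₂²` satisfy
`ghgh = hghg` (both sides being the central element `(σ₁σ₂)³`) but `gh ≠ hg`; hence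
the subgroup `⟨g, h⟩` of `B₃` is neither abelian nor free of rank 2, so the
conclusion of the Main Theorem fails for this extension of `PB₃` by a half-twist. -/
theorem braid_group_halftwist_dehntwist_relation :
    sigma1 * sigma2 ^ 2 * sigma1 * sigma2 ^ 2 = sigma2 ^ 2 * sigma1 * sigma2 ^ 2 * sigma1 ∧
    sigma1 * sigma2 ^ 2 * sigma1 * sigma2 ^ 2 = (sigma1 * sigma2) ^ 3 ∧
    sigma1 * sigma2 ^ 2 ≠ sigma2 ^ 2 * sigma1 ∧
    ¬ (∀ x y : (Subgroup.closure {sigma1, sigma2 ^ 2} : Subgroup (BraidGroup 3)),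
        x * y = y * x) ∧
    ¬ Nonempty ((Subgroup.closure {sigma1, sigma2 ^ 2} : Subgroup (BraidGroup 3)) ≃*
        FreeGroup (Fin 2)) := by
  obtain ⟨e1, e2, e3, e4⟩ := braid_calc sigma1 sigma2 braid_rel3
  have hneq : sigma1 * sigma2 ^ 2 ≠ sigma2 ^ 2 * sigma1 := by
    intro hco
    have h := congrArg psi hco
    simp only [map_mul, map_pow, psi_s1, psi_s2] at h
    exact (by decide : ¬(myA * myB ^ 2 = myB ^ 2 * myA)) h
  have hg : sigma1 ∈ Subgroup.closure {sigma1, sigma2 ^ 2} :=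
    Subgroup.subset_closure (Set.mem_insert _ _)
  have hh : sigma2 ^ 2 ∈ Subgroup.closure {sigma1, sigma2 ^ 2} :=
    Subgroup.subset_closure (Set.mem_insert_of_mem _ rfl)
  refine ⟨e1.trans e2.symm, e1, hneq, ?_, ?_⟩
  · intro hall
    have h := hall ⟨sigma1, hg⟩ ⟨sigma2 ^ 2, hh⟩
    apply hneq
    exact congrArg Subtype.val h
  · rintro ⟨φ⟩
    have hzmem : (sigma1 * sigma2) ^ 3 ∈ Subgroup.closure {sigma1, sigma2 ^ 2} := by
      rw [← e1]
      exact mul_mem (mul_mem (mul_mem hg hh) hg) hh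
    have hzcomm : ∀ x ∈ Subgroup.closure {sigma1, sigma2 ^ 2},
        (sigma1 * sigma2) ^ 3 * x = x * (sigma1 * sigma2) ^ 3 := by
      intro x hx
      refine Subgroup.closure_induction (fun y hy => ?_) (Commute.one_right _)
        (fun y z _ _ hy hz => Commute.mul_right hy hz)
        (fun y _ hy => Commute.inv_right hy) hx
      rcases hy with rfl | rfl
      · exact e3
      · exact ((show Commute ((sigma1 * sigma2) ^ 3) sigma2 from e4).pow_right 2)
    have hz1 : (sigma1 * sigma2) ^ 3 ≠ 1 := by
      intro h0
      have h := congrArg psi h0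
      simp only [map_pow, map_mul, psi_s1, psi_s2, map_one] at h
      exact (by decide : ¬((myA * myB) ^ 3 = 1)) h
    set zel : (Subgroup.closure {sigma1, sigma2 ^ 2} : Subgroup (BraidGroup 3)) :=
      ⟨(sigma1 * sigma2) ^ 3, hzmem⟩ with hzel
    have hc1 : φ zel ≠ 1 := by
      intro h
      apply hz1
      have h2 : zel = 1 := φ.injective (h.trans (map_one φ).symm)
      exact congrArg Subtype.val h2
    have hcc : ∀ y : FreeGroup (Fin 2), φ zel * y = y * φ zel := by
      intro y
      have h5 : zel * φ.symm y = φ.symm y * zel :=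
        Subtype.ext (hzcomm _ (φ.symm y).2)
      have h6 := congrArg φ h5
      rw [map_mul, map_mul, MulEquiv.apply_symm_apply] at h6
      exact h6
    exact hc1 (FreeGroupAux.eq_one_of_commute_of_of (by decide : (0 : Fin 2) ≠ 1)
      (hcc _) (hcc _))
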